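/- Corollary 2: in the absence of noise, the SINR coverage of a corner user in a room of height h equals that of a center user in a room of height h/2. Precisely: fix a > 0, h > 0, β > 0, λ > 0, τ > 0. Then C(λ, a, h, 0, τ, (a,a)) = C(λ, a, h/2, 0, τ, (0,0)), where C(λ, a, h, σ², τ, y) is the coverage probability of the mixed-binomial Poisson model with parameters (λ, a, h) at receiver location y. -/

import Mathlib

open MeasureTheory ProbabilityTheory
open scoped ENNReal

noncomputable section

/-- The plane `ℝ²` with the Euclidean norm. -/
abbrev E2 := EuclideanSpace ℝ (Fin 2)

/-- The closed square of center `c` and half-side `a`. -/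
def Sq (c : E2) (a : ℝ) : Set E2 := {x | ∀ i, |x i - c i| ≤ a}

/-- The path-loss between a transmitter at `x` (at height `h`) and a receiver at `y`. -/
def pl (h β : ℝ) (x y : E2) : ℝ := (‖x - y‖ ^ 2 + h ^ 2) ^ (-β)

/-- The SINR coverage probability of the mixed-binomial Poisson model with transmitter
density `lam`, room half-side `a` and height `h`, at a receiver located at `y`, with
noise `σ2` and SINR threshold `τ`: the number of transmitters `N` is Poisson with mean
`4a²λ` and, given `N = n`, the transmitters are `n` i.i.d. points uniform on `S(0,a)`;
coverage holds when some transmitter `i` satisfies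
`ℓ(X_i,y) > τ (∑_{j≠i} ℓ(X_j,y) + σ2)`. -/
def cov (β lam a h σ2 τ : ℝ) (y : E2) : ℝ≥0∞ :=
  ∑' n : ℕ,
    ENNReal.ofReal (Real.exp (-(4 * a ^ 2 * lam)) * (4 * a ^ 2 * lam) ^ n / n.factorial) *
      ((Measure.pi fun _ : Fin n => volume.restrict (Sq 0 a))
          {x : Fin n → E2 | ∃ i,
            pl h β (x i) y > τ * ((∑ j, pl h β (x j) y) - pl h β (x i) y + σ2)}
        / (volume (Sq 0 a)) ^ n)

/-- The corner of the room `S(0,a)`, i.e. the point `(a, a)`. -/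
def corner (a : ℝ) : E2 := (WithLp.equiv 2 (Fin 2 → ℝ)).symm ![a, a]

/-! ### Auxiliary lemmas -/

/-- 1D change-of-variables and reflection lemma: the pushforward of the uniform measure on
`[-a,a]` under `t ↦ ((t-a)/2)²` coincides with the pushforward under `t ↦ t²`. -/
lemma map_sq_shift (a : ℝ) (ha : 0 < a) :
    Measure.map (fun t : ℝ => ((t - a) / 2) ^ 2) (volume.restrict (Set.Icc (-a) a)) =
    Measure.map (fun t : ℝ => t ^ 2) (volume.restrict (Set.Icc (-a) a)) := by
  set m : Measure ℝ := volume.restrict (Set.Icc (-a) a) with hm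
  have hg : Measurable (fun t : ℝ => (a - t) / 2) := by fun_prop
  have hsq : Measurable (fun u : ℝ => u ^ 2) := by fun_prop
  have hmapg : Measure.map (fun t : ℝ => (a - t) / 2) volume = (2 : ℝ≥0∞) • volume := by
    have h1 : (fun t : ℝ => (a - t) / 2) = (fun u : ℝ => (1/2 : ℝ) * u) ∘ (fun t : ℝ => a + -t) := by
      funext t; simp; ring
    rw [h1, ← Measure.map_map (by fun_prop) (by fun_prop)]
    have h2 : Measure.map (fun t : ℝ => a + -t) (volume : Measure ℝ) = volume := by
      rw [show (fun t : ℝ => a + -t) = (fun u : ℝ => a + u) ∘ Neg.neg by funext t; simp,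
        ← Measure.map_map (by fun_prop) (by fun_prop), Measure.map_neg_eq_self,
        (measurePreserving_add_left volume a).map_eq]
    rw [h2, Real.map_volume_mul_left (by norm_num : (1/2 : ℝ) ≠ 0)]
    norm_num
  have hpre : (fun t : ℝ => (a - t) / 2) ⁻¹' (Set.Icc 0 a) = Set.Icc (-a) a := by
    ext t; simp only [Set.mem_preimage, Set.mem_Icc]
    constructor <;> intro h <;> constructor <;> linarith [h.1, h.2]
  have hgm : Measure.map (fun t : ℝ => (a - t) / 2) m =
      (2 : ℝ≥0∞) • volume.restrict (Set.Icc 0 a) := by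
    rw [hm, ← hpre, ← Measure.restrict_map hg measurableSet_Icc, hmapg, Measure.restrict_smul]
  have hL : Measure.map (fun t : ℝ => ((t - a) / 2) ^ 2) m =
      (2 : ℝ≥0∞) • Measure.map (fun u : ℝ => u ^ 2) (volume.restrict (Set.Icc 0 a)) := by
    have h1 : (fun t : ℝ => ((t - a) / 2) ^ 2)
        = (fun u : ℝ => u ^ 2) ∘ (fun t : ℝ => (a - t) / 2) := by
      funext t; simp only [Function.comp]; ring
    rw [h1, ← Measure.map_map hsq hg, hgm, Measure.map_smul]
  have hsplit : m = volume.restrict (Set.Ico (-a) 0) + volume.restrict (Set.Icc 0 a) := by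
    have hdisj : Disjoint (Set.Ico (-a) 0) (Set.Icc (0:ℝ) a) := by
      rw [Set.disjoint_left]
      intro x h1 h2
      exact absurd h2.1 (not_le.mpr h1.2)
    rw [hm, ← Set.Ico_union_Icc_eq_Icc (show -a ≤ (0:ℝ) by linarith) (show (0:ℝ) ≤ a by linarith)]
    exact Measure.restrict_union hdisj measurableSet_Icc
  have hneg : Measure.map Neg.neg (volume.restrict (Set.Ioc 0 a)) =
      volume.restrict (Set.Ico (-a) 0) := by
    have hpre2 : (Neg.neg : ℝ → ℝ) ⁻¹' (Set.Ico (-a) 0) = Set.Ioc 0 a := by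
      ext t; simp only [Set.mem_preimage, Set.mem_Ico, Set.mem_Ioc]
      constructor <;> intro h <;> constructor <;> linarith [h.1, h.2]
    rw [← hpre2, ← Measure.restrict_map measurable_neg measurableSet_Ico,
      Measure.map_neg_eq_self]
  have hrefl : Measure.map (fun u : ℝ => u ^ 2) (volume.restrict (Set.Ico (-a) 0)) =
      Measure.map (fun u : ℝ => u ^ 2) (volume.restrict (Set.Icc 0 a)) := by
    rw [← hneg, Measure.map_map hsq measurable_neg]
    have : (fun u : ℝ => u ^ 2) ∘ Neg.neg = fun u : ℝ => u ^ 2 := by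
      funext u; simp
    rw [this, Measure.restrict_congr_set Ioc_ae_eq_Icc]
  rw [hL, hsplit, Measure.map_add _ _ hsq, hrefl, two_smul]

lemma pi_restrict {ι : Type*} [Fintype ι] {α : ι → Type*} [∀ i, MeasurableSpace (α i)]
    (μ : ∀ i, Measure (α i)) [∀ i, SigmaFinite (μ i)] (s : ∀ i, Set (α i))
    (hs : ∀ i, MeasurableSet (s i)) :
    (Measure.pi μ).restrict (Set.pi Set.univ s) = Measure.pi (fun i => (μ i).restrict (s i)) := by
  refine (Measure.pi_eq fun t ht => ?_).symm
  rw [Measure.restrict_apply (MeasurableSet.univ_pi ht), ← Set.pi_inter_distrib,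
    Measure.pi_pi]
  exact Finset.prod_congr rfl fun i _ => (Measure.restrict_apply (ht i)).symm

lemma corner_apply (a : ℝ) (i : Fin 2) : corner a i = a := by
  fin_cases i <;> rfl

lemma norm_sq_eq (x : E2) : ‖x‖ ^ 2 = ∑ i, x i ^ 2 := by
  rw [EuclideanSpace.norm_eq,
    Real.sq_sqrt (Finset.sum_nonneg fun i _ => sq_nonneg (‖x i‖))]
  exact Finset.sum_congr rfl fun i _ => by rw [Real.norm_eq_abs, sq_abs]

lemma mequiv_apply (x : E2) (i : Fin 2) : ((MeasurableEquiv.toLp 2 (Fin 2 → ℝ)).symm) x i = x i :=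
  rfl

lemma sq_eq_preimage (a : ℝ) :
    Sq 0 a = ((MeasurableEquiv.toLp 2 (Fin 2 → ℝ)).symm) ⁻¹'
      (Set.pi Set.univ fun _ : Fin 2 => Set.Icc (-a) a) := by
  ext x
  simp only [Sq, Set.mem_setOf_eq, Set.mem_preimage, Set.mem_pi, Set.mem_univ, forall_true_left,
    Set.mem_Icc, mequiv_apply]
  have h0 : ∀ i : Fin 2, (0 : E2) i = 0 := fun i => rfl
  constructor
  · intro hx i
    have := hx i
    rw [h0 i, sub_zero, abs_le] at this
    exact ⟨this.1, this.2⟩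
  · intro hx i
    have := hx i
    rw [h0 i, sub_zero, abs_le]
    exact ⟨this.1, this.2⟩

lemma phi1_meas (a : ℝ) : Measurable (fun x : E2 => ‖x - corner a‖ ^ 2 / 4) := by
  fun_prop

lemma phi2_meas : Measurable (fun x : E2 => ‖x‖ ^ 2) := by fun_prop

/-- 2D key lemma: the pushforward of the uniform measure on the square `S(0,a)` under
`x ↦ ‖x - corner‖²/4` coincides with the pushforward under `x ↦ ‖x‖²`. -/
lemma map_phi_eq (a : ℝ) (ha : 0 < a) :
    Measure.map (fun x : E2 => ‖x - corner a‖ ^ 2 / 4) (volume.restrict (Sq 0 a)) =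
    Measure.map (fun x : E2 => ‖x‖ ^ 2) (volume.restrict (Sq 0 a)) := by
  set e := (MeasurableEquiv.toLp 2 (Fin 2 → ℝ)).symm with he
  set m : Measure ℝ := volume.restrict (Set.Icc (-a) a) with hm
  have hmfin : IsFiniteMeasure m := by
    constructor
    rw [hm, Measure.restrict_apply_univ]
    exact measure_Icc_lt_top
  set ν : Measure ℝ := Measure.map (fun t : ℝ => t ^ 2) m with hν
  haveI : IsFiniteMeasure ν := by
    constructor
    rw [hν, Measure.map_apply (by fun_prop) MeasurableSet.univ]
    simpa using hmfin.measure_univ_lt_top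
  -- transfer the uniform measure on the square to a product measure
  have hμe : Measure.map e (volume.restrict (Sq 0 a)) = Measure.pi (fun _ : Fin 2 => m) := by
    rw [sq_eq_preimage a, ← Measure.restrict_map e.measurable
      (MeasurableSet.univ_pi fun _ => measurableSet_Icc),
      (EuclideanSpace.volume_preserving_symm_measurableEquiv_toLp (Fin 2)).map_eq, volume_pi,
      pi_restrict _ _ fun _ => measurableSet_Icc]
  have hf1 : MeasurePreserving (fun t : ℝ => ((t - a) / 2) ^ 2) m ν :=
    ⟨by fun_prop, by rw [hν]; exact map_sq_shift a ha⟩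
  have hf2 : MeasurePreserving (fun t : ℝ => t ^ 2) m ν := ⟨by fun_prop, rfl⟩
  have hC1 := measurePreserving_pi (fun _ : Fin 2 => m) (fun _ : Fin 2 => ν) fun _ => hf1
  have hC2 := measurePreserving_pi (fun _ : Fin 2 => m) (fun _ : Fin 2 => ν) fun _ => hf2
  have hFmeas : Measurable (fun v : Fin 2 → ℝ => ∑ i, v i) := by fun_prop
  -- decompose φ₁
  have hφ1 : (fun x : E2 => ‖x - corner a‖ ^ 2 / 4)
      = ((fun v : Fin 2 → ℝ => ∑ i, v i) ∘ (fun v : Fin 2 → ℝ => fun i => ((v i - a) / 2) ^ 2)) ∘ e := by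
    funext x
    simp only [Function.comp]
    rw [norm_sq_eq, Finset.sum_div]
    refine Finset.sum_congr rfl fun i _ => ?_
    have hsub : (x - corner a) i = x i - a := by
      rw [show (x - corner a) i = x i - corner a i from rfl, corner_apply]
    rw [hsub, mequiv_apply]
    ring
  have hφ2 : (fun x : E2 => ‖x‖ ^ 2)
      = ((fun v : Fin 2 → ℝ => ∑ i, v i) ∘ (fun v : Fin 2 → ℝ => fun i => (v i) ^ 2)) ∘ e := by
    funext x
    simp only [Function.comp]
    rw [norm_sq_eq]
    exact Finset.sum_congr rfl fun i _ => by rw [mequiv_apply]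
  rw [hφ1, hφ2,
    ← Measure.map_map (hFmeas.comp hC1.measurable) e.measurable,
    ← Measure.map_map hFmeas hC1.measurable, hμe, hC1.map_eq,
    ← Measure.map_map (hFmeas.comp hC2.measurable) e.measurable,
    ← Measure.map_map hFmeas hC2.measurable, hμe, hC2.map_eq]

/-- The uniform measure on the square is finite. -/
lemma sq_vol_lt_top (a : ℝ) : volume (Sq 0 a) < ⊤ := by
  rw [sq_eq_preimage a,
    (EuclideanSpace.volume_preserving_symm_measurableEquiv_toLp (Fin 2)).measure_preimage
      (MeasurableSet.univ_pi fun _ => measurableSet_Icc).nullMeasurableSet]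
  rw [volume_pi, Measure.pi_pi]
  exact ENNReal.prod_lt_top fun i _ => measure_Icc_lt_top

/-- Key per-`n` lemma: equality of the coverage event measures. -/
lemma key_measure_eq (a h β τ : ℝ) (ha : 0 < a) (hh : 0 < h) (n : ℕ) :
    (Measure.pi fun _ : Fin n => volume.restrict (Sq 0 a))
        {x : Fin n → E2 | ∃ i,
          pl h β (x i) (corner a) >
            τ * ((∑ j, pl h β (x j) (corner a)) - pl h β (x i) (corner a) + 0)} =
    (Measure.pi fun _ : Fin n => volume.restrict (Sq 0 a))
        {x : Fin n → E2 | ∃ i,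
          pl (h / 2) β (x i) 0 >
            τ * ((∑ j, pl (h / 2) β (x j) 0) - pl (h / 2) β (x i) 0 + 0)} := by
  set μ₂ : Measure E2 := volume.restrict (Sq 0 a) with hμ₂
  haveI : IsFiniteMeasure μ₂ := by
    constructor
    rw [hμ₂, Measure.restrict_apply_univ]
    exact sq_vol_lt_top a
  set φ₁ : E2 → ℝ := fun x => ‖x - corner a‖ ^ 2 / 4 with hφ₁
  set φ₂ : E2 → ℝ := fun x => ‖x‖ ^ 2 with hφ₂
  set ρ : Measure ℝ := Measure.map φ₂ μ₂ with hρ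
  haveI : IsFiniteMeasure ρ := by
    constructor
    rw [hρ, Measure.map_apply phi2_meas MeasurableSet.univ]
    simpa using (inferInstance : IsFiniteMeasure μ₂).measure_univ_lt_top
  set Q : ℝ → ℝ := fun t => (t + (h / 2) ^ 2) ^ (-β) with hQ
  have hQm : Measurable Q := (measurable_id.add_const _).pow measurable_const
  set A : Set (Fin n → ℝ) :=
    {s : Fin n → ℝ | ∃ i, Q (s i) > τ * ((∑ j, Q (s j)) - Q (s i) + 0)} with hA
  have hAm : MeasurableSet A := by
    rw [hA]
    have : {s : Fin n → ℝ | ∃ i, Q (s i) > τ * ((∑ j, Q (s j)) - Q (s i) + 0)}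
        = ⋃ i, {s : Fin n → ℝ | τ * ((∑ j, Q (s j)) - Q (s i) + 0) < Q (s i)} := by
      ext s; simp [Set.mem_iUnion]
    rw [this]
    refine MeasurableSet.iUnion fun i => ?_
    refine measurableSet_lt ?_ ?_
    · refine (measurable_const.mul ?_)
      refine (((Finset.measurable_sum Finset.univ
        fun j _ => hQm.comp (measurable_pi_apply j)).sub
        (hQm.comp (measurable_pi_apply i))).add_const 0)
    · exact hQm.comp (measurable_pi_apply i)
  have hΦ1 : MeasurePreserving (fun x : Fin n → E2 => fun i => φ₁ (x i))
      (Measure.pi fun _ : Fin n => μ₂) (Measure.pi fun _ : Fin n => ρ) :=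
    measurePreserving_pi _ _ fun _ => ⟨phi1_meas a, by rw [hρ, hφ₁, hφ₂]; exact map_phi_eq a ha⟩
  have hΦ2 : MeasurePreserving (fun x : Fin n → E2 => fun i => φ₂ (x i))
      (Measure.pi fun _ : Fin n => μ₂) (Measure.pi fun _ : Fin n => ρ) :=
    measurePreserving_pi _ _ fun _ => ⟨phi2_meas, rfl⟩
  -- identify the corner event
  have c_pos : (0 : ℝ) < (4 : ℝ) ^ (-β) := Real.rpow_pos_of_pos (by norm_num) _
  have hpl1 : ∀ z : E2, pl h β z (corner a) = (4 : ℝ) ^ (-β) * Q (φ₁ z) := by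
    intro z
    rw [pl, hQ, hφ₁]
    have hbase : ‖z - corner a‖ ^ 2 + h ^ 2 = 4 * (‖z - corner a‖ ^ 2 / 4 + (h / 2) ^ 2) := by
      ring
    rw [hbase, Real.mul_rpow (by norm_num)
      (by positivity)]
  have hpl2 : ∀ z : E2, pl (h / 2) β z 0 = Q (φ₂ z) := by
    intro z
    rw [pl, hQ, hφ₂, sub_zero]
  have hset1 : {x : Fin n → E2 | ∃ i,
        pl h β (x i) (corner a) >
          τ * ((∑ j, pl h β (x j) (corner a)) - pl h β (x i) (corner a) + 0)}
      = (fun x : Fin n → E2 => fun i => φ₁ (x i)) ⁻¹' A := by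
    ext x
    simp only [Set.mem_setOf_eq, Set.mem_preimage, hA]
    refine exists_congr fun i => ?_
    simp only [hpl1]
    rw [← Finset.mul_sum]
    have hre : τ * ((4:ℝ) ^ (-β) * (∑ j, Q (φ₁ (x j))) - (4:ℝ) ^ (-β) * Q (φ₁ (x i)) + 0)
        = (4:ℝ) ^ (-β) * (τ * ((∑ j, Q (φ₁ (x j))) - Q (φ₁ (x i)) + 0)) := by ring
    rw [gt_iff_lt, gt_iff_lt, hre, mul_lt_mul_iff_right₀ c_pos]
  have hset2 : {x : Fin n → E2 | ∃ i,
        pl (h / 2) β (x i) 0 >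
          τ * ((∑ j, pl (h / 2) β (x j) 0) - pl (h / 2) β (x i) 0 + 0)}
      = (fun x : Fin n → E2 => fun i => φ₂ (x i)) ⁻¹' A := by
    ext x
    simp only [Set.mem_setOf_eq, Set.mem_preimage, hA, hpl2]
  rw [hset1, hset2, hΦ1.measure_preimage hAm.nullMeasurableSet,
    hΦ2.measure_preimage hAm.nullMeasurableSet]

/-- Corollary 2: in the absence of noise, the SINR coverage of a corner user in a room
of height `h` equals that of a center user in a room of height `h/2`. -/
theorem corner_coverage_eq_center_coverage_half_height
    (a h β lam τ : ℝ) (ha : 0 < a) (hh : 0 < h) (hβ : 0 < β) (hlam : 0 < lam)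
    (hτ : 0 < τ) :
    cov β lam a h 0 τ (corner a) = cov β lam a (h / 2) 0 τ 0 := by
  rw [cov, cov]
  refine tsum_congr fun n => ?_
  rw [key_measure_eq a h β τ ha hh n]

end
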